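/- Let C be an object of 𝒞 and suppose there exist an object A′ in 𝒞 and a non-zero morphism c : C → ΣA′. Let X → Y → C --d--> ΣX be an Auslander-Reiten triangle in 𝒯, and suppose there exists an Auslander-Reiten triangle A → B → C → ΣA in 𝒞. Then there exists a morphism α : A → X which is a 𝒞-cover of X. -/

import Mathlib

open CategoryTheory CategoryTheory.Limits CategoryTheory.Pretriangulated

universe v u

variable {k : Type} [Field k]
variable {T : Type u} [Category.{v} T] [Preadditive T] [Linear k T]
  [HasZeroObject T] [HasShift T ℤ] [∀ n : ℤ, (shiftFunctor T n).Additive]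
  [Pretriangulated T]

/-- `α : A ⟶ X` is an `S`-precover of `X`. -/
def IsPrecover (S : Set T) {A X : T} (α : A ⟶ X) : Prop :=
  A ∈ S ∧ ∀ A' : T, A' ∈ S → ∀ f : A' ⟶ X, ∃ g : A' ⟶ A, g ≫ α = f

/-- `α : A ⟶ X` is an `S`-cover: a right-minimal `S`-precover. -/
def IsCover (S : Set T) {A X : T} (α : A ⟶ X) : Prop :=
  IsPrecover S α ∧ ∀ f : A ⟶ A, f ≫ α = α → IsIso f

/-- `X ⟶ Y ⟶ Z --d--> ΣX` is an Auslander-Reiten triangle in `T`. -/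
def IsARTriangle {X Y Z : T} (f : X ⟶ Y) (g : Y ⟶ Z) (d : Z ⟶ X⟦(1 : ℤ)⟧) : Prop :=
  (Triangle.mk f g d ∈ distTriang T) ∧ d ≠ 0 ∧
    (∀ (X' : T) (u : X ⟶ X'), ¬(∃ v : X' ⟶ X, u ≫ v = 𝟙 X) → ∃ w : Y ⟶ X', f ≫ w = u) ∧
    (∀ (Z' : T) (u : Z' ⟶ Z), ¬(∃ v : Z ⟶ Z', v ≫ u = 𝟙 Z) → ∃ w : Z' ⟶ Y, w ≫ g = u)

/-- `A ⟶ B ⟶ C --h--> ΣA` is an Auslander-Reiten triangle in the subcategory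
determined by `S`. -/
def IsARTriangleIn (S : Set T) {A B C : T} (f : A ⟶ B) (g : B ⟶ C)
    (h : C ⟶ A⟦(1 : ℤ)⟧) : Prop :=
  A ∈ S ∧ B ∈ S ∧ C ∈ S ∧ (Triangle.mk f g h ∈ distTriang T) ∧ h ≠ 0 ∧
    (∀ A' : T, A' ∈ S → ∀ u : A ⟶ A',
      ¬(∃ v : A' ⟶ A, u ≫ v = 𝟙 A) → ∃ w : B ⟶ A', f ≫ w = u) ∧
    (∀ C' : T, C' ∈ S → ∀ u : C' ⟶ C,
      ¬(∃ v : C ⟶ C', v ≫ u = 𝟙 C) → ∃ w : C' ⟶ B, w ≫ g = u)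

/-- Existence of a linear functional taking value `1` on a non-zero vector. -/
lemma exists_dual_one {V : Type*} [AddCommGroup V] [Module k V] {x : V} (hx : x ≠ 0) :
    ∃ f : Module.Dual k V, f x = 1 := by
  have h : ¬ ∀ φ : Module.Dual k V, φ x = 0 := by
    rw [Module.forall_dual_apply_eq_zero_iff k]; exact hx
  push_neg at h
  obtain ⟨φ, hφ⟩ := h
  exact ⟨(φ x)⁻¹ • φ, by simp [inv_mul_cancel₀ hφ]⟩

/-- "Socle reaching" lemma, right version: if `X ⟶ Y ⟶ C --d--> ΣX` is a distinguished
triangle in which every non-section out of `X` factors through `X ⟶ Y`, then for every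
non-zero morphism `ψ : W ⟶ ΣX`, the connecting morphism `d` factors through `ψ`. -/
lemma socle_right {X Y C : T} {f : X ⟶ Y} {g : Y ⟶ C} {d : C ⟶ X⟦(1 : ℤ)⟧}
    (hT₁ : Triangle.mk f g d ∈ distTriang T)
    (hTii : ∀ (X' : T) (u : X ⟶ X'), ¬(∃ v : X' ⟶ X, u ≫ v = 𝟙 X) → ∃ w : Y ⟶ X', f ≫ w = u)
    {W : T} (ψ : W ⟶ X⟦(1 : ℤ)⟧) (hψ : ψ ≠ 0) :
    ∃ χ : C ⟶ W, χ ≫ ψ = d := by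
  obtain ⟨Y₀, f₀, g₀, hT₀⟩ := distinguished_cocone_triangle₂ ψ
  have hf₀ : ¬ ∃ q : Y₀ ⟶ X, f₀ ≫ q = 𝟙 X := by
    rintro ⟨q, hq⟩
    apply hψ
    have h31 : ψ ≫ f₀⟦(1 : ℤ)⟧' = 0 := comp_distTriang_mor_zero₃₁ _ hT₀
    have : ψ ≫ (f₀ ≫ q)⟦(1 : ℤ)⟧' = ψ := by rw [hq, CategoryTheory.Functor.map_id, Category.comp_id]
    rw [CategoryTheory.Functor.map_comp, ← Category.assoc, h31, zero_comp] at this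
    exact this.symm
  obtain ⟨h, hh⟩ := hTii Y₀ f₀ hf₀
  obtain ⟨χ, _, hχ⟩ := complete_distinguished_triangle_morphism
    (Triangle.mk f g d) (Triangle.mk f₀ g₀ ψ) hT₁ hT₀ (𝟙 X) h
    (hh.trans (Category.id_comp f₀).symm)
  refine ⟨χ, ?_⟩
  change d ≫ (shiftFunctor T (1 : ℤ)).map (𝟙 X) = χ ≫ ψ at hχ
  rw [CategoryTheory.Functor.map_id, Category.comp_id] at hχ
  exact hχ.symm

theorem cover_of_AR_triangle_in_subcategory (S : Set T)
    [EssentiallySmall.{v} T] [IsIdempotentComplete T]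
    (hfd : ∀ X Y : T, FiniteDimensional k (X ⟶ Y))
    (hiso : ∀ {X Y : T}, (X ≅ Y) → X ∈ S → Y ∈ S)
    (hext : ∀ {A B C : T} (f : A ⟶ B) (g : B ⟶ C) (h : C ⟶ A⟦(1 : ℤ)⟧),
      Triangle.mk f g h ∈ (distTriang T) → A ∈ S → C ∈ S → B ∈ S)
    (hsum : ∀ {A A₁ : T} (i : A₁ ⟶ A) (p : A ⟶ A₁), i ≫ p = 𝟙 A₁ → A ∈ S → A₁ ∈ S)
    {C A' : T} (hC : C ∈ S) (hA' : A' ∈ S)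
    (c : C ⟶ A'⟦(1 : ℤ)⟧) (hc : c ≠ 0)
    {X Y : T} (f : X ⟶ Y) (g : Y ⟶ C) (d : C ⟶ X⟦(1 : ℤ)⟧)
    (hAR : IsARTriangle f g d)
    {A : T}
    (hARC : ∃ (B : T) (u : A ⟶ B) (v : B ⟶ C) (w : C ⟶ A⟦(1 : ℤ)⟧),
      IsARTriangleIn S u v w) :
    ∃ α : A ⟶ X, IsCover S α := by
  obtain ⟨B, u, v, w, hAS, hBS, hCS, hT₂, hw, hAii, hAiii⟩ := hARC
  obtain ⟨hT₁, hd, hTii, hTiii⟩ := hAR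
  -- `v` is not a retraction
  have hvret : ¬ ∃ ρ : C ⟶ B, ρ ≫ v = 𝟙 C := by
    rintro ⟨ρ, hρ⟩
    apply hw
    have h0 : v ≫ w = 0 := comp_distTriang_mor_zero₂₃ _ hT₂
    calc w = (ρ ≫ v) ≫ w := by rw [hρ, Category.id_comp]
    _ = ρ ≫ (v ≫ w) := Category.assoc _ _ _
    _ = 0 := by rw [h0, comp_zero]
  -- `v ≫ d = 0` since `v` factors through `g`
  obtain ⟨b, hb⟩ := hTiii B v hvret
  have hgd : g ≫ d = 0 := comp_distTriang_mor_zero₂₃ _ hT₁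
  have hvd : v ≫ d = 0 := by
    rw [← hb, Category.assoc, hgd, comp_zero]
  -- obtain `a : A ⟶ X` with `d = w ≫ a⟦1⟧`
  obtain ⟨n, hn⟩ := Triangle.yoneda_exact₂ _ (rot_of_distTriang _ hT₂) d hvd
  obtain ⟨a, ha⟩ := (shiftFunctor T (1 : ℤ)).map_surjective (X := A) n
  change d = w ≫ n at hn
  rw [← ha] at hn
  -- hn : d = w ≫ (shiftFunctor T 1).map a
  refine ⟨a, ⟨hAS, ?_⟩, ?_⟩
  · -- precover property
    intro A₂ hA₂ φ
    haveI := hfd (A₂⟦(1 : ℤ)⟧) (X⟦(1 : ℤ)⟧)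
    haveI := hfd C (A₂⟦(1 : ℤ)⟧)
    haveI := hfd (A₂⟦(1 : ℤ)⟧) (A⟦(1 : ℤ)⟧)
    haveI := hfd C (X⟦(1 : ℤ)⟧)
    -- the linear functional
    obtain ⟨lam, hlam⟩ := exists_dual_one (k := k) hd
    -- socle lemma, left versions
    have socL : ∀ (χ : C ⟶ A₂⟦(1 : ℤ)⟧), χ ≠ 0 →
        (∃ nn : A₂⟦(1 : ℤ)⟧ ⟶ X⟦(1 : ℤ)⟧, χ ≫ nn = d) ∧
        (∃ cc : A₂⟦(1 : ℤ)⟧ ⟶ A⟦(1 : ℤ)⟧, χ ≫ cc = w) := by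
      intro χ hχ
      obtain ⟨P, q, p, hTP⟩ := distinguished_cocone_triangle₂ χ
      have hPS : P ∈ S := hext q p χ hTP hA₂ hC
      have hp : ¬ ∃ ρ : C ⟶ P, ρ ≫ p = 𝟙 C := by
        rintro ⟨ρ, hρ⟩
        apply hχ
        have h23 : p ≫ χ = 0 := comp_distTriang_mor_zero₂₃ _ hTP
        calc χ = (ρ ≫ p) ≫ χ := by rw [hρ, Category.id_comp]
        _ = ρ ≫ (p ≫ χ) := Category.assoc _ _ _
        _ = 0 := by rw [h23, comp_zero]
      constructor
      · obtain ⟨p', hp'⟩ := hTiii P p hp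
        obtain ⟨nn, hnn, _⟩ := complete_distinguished_triangle_morphism
          (Triangle.mk q p χ).rotate (Triangle.mk f g d).rotate
          (rot_of_distTriang _ hTP) (rot_of_distTriang _ hT₁) p' (𝟙 C)
          ((Category.comp_id p).trans hp'.symm)
        refine ⟨nn, ?_⟩
        change χ ≫ nn = 𝟙 C ≫ d at hnn
        rw [Category.id_comp] at hnn
        exact hnn
      · obtain ⟨p', hp'⟩ := hAiii P hPS p hp
        obtain ⟨cc, hcc, _⟩ := complete_distinguished_triangle_morphism
          (Triangle.mk q p χ).rotate (Triangle.mk u v w).rotate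
          (rot_of_distTriang _ hTP) (rot_of_distTriang _ hT₂) p' (𝟙 C)
          ((Category.comp_id p).trans hp'.symm)
        refine ⟨cc, ?_⟩
        change χ ≫ cc = 𝟙 C ≫ w at hcc
        rw [Category.id_comp] at hcc
        exact hcc
    -- linear maps
    let Q1 : (A₂⟦(1 : ℤ)⟧ ⟶ X⟦(1 : ℤ)⟧) →ₗ[k] Module.Dual k (C ⟶ A₂⟦(1 : ℤ)⟧) :=
      { toFun := fun ψ => lam.comp (Linear.rightComp k C ψ)
        map_add' := fun ψ₁ ψ₂ => by
          ext χ
          simp [Preadditive.comp_add]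
        map_smul' := fun r ψ => by
          ext χ
          simp [Linear.comp_smul] }
    let Q2 : (C ⟶ A₂⟦(1 : ℤ)⟧) →ₗ[k] Module.Dual k (A₂⟦(1 : ℤ)⟧ ⟶ X⟦(1 : ℤ)⟧) :=
      { toFun := fun χ => lam.comp (Linear.leftComp k (X⟦(1 : ℤ)⟧) χ)
        map_add' := fun χ₁ χ₂ => by
          ext ψ
          simp [Preadditive.add_comp]
        map_smul' := fun r χ => by
          ext ψ
          simp [Linear.smul_comp] }
    have hQ1inj : Function.Injective Q1 := by
      rw [injective_iff_map_eq_zero]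
      intro ψ hψ0
      by_contra hne
      obtain ⟨χ, hχ⟩ := socle_right hT₁ hTii ψ hne
      have h1 : Q1 ψ χ = 0 := by rw [hψ0]; rfl
      have h2 : Q1 ψ χ = 1 := by
        simp only [Q1, LinearMap.coe_mk, AddHom.coe_mk, LinearMap.coe_comp, Function.comp_apply,
          Linear.rightComp_apply]
        rw [hχ, hlam]
      rw [h1] at h2
      exact one_ne_zero h2.symm
    have hQ2inj : Function.Injective Q2 := by
      rw [injective_iff_map_eq_zero]
      intro χ hχ0
      by_contra hne
      obtain ⟨nn, hnn⟩ := (socL χ hne).1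
      have h1 : Q2 χ nn = 0 := by rw [hχ0]; rfl
      have h2 : Q2 χ nn = 1 := by
        simp only [Q2, LinearMap.coe_mk, AddHom.coe_mk, LinearMap.coe_comp, Function.comp_apply,
          Linear.leftComp_apply]
        rw [hnn, hlam]
      rw [h1] at h2
      exact one_ne_zero h2.symm
    -- dimensions
    have hle1 : Module.finrank k (A₂⟦(1 : ℤ)⟧ ⟶ X⟦(1 : ℤ)⟧) ≤
        Module.finrank k (C ⟶ A₂⟦(1 : ℤ)⟧) := by
      have := LinearMap.finrank_le_finrank_of_injective hQ1inj
      rwa [Subspace.dual_finrank_eq] at this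
    have hle2 : Module.finrank k (C ⟶ A₂⟦(1 : ℤ)⟧) ≤
        Module.finrank k (A₂⟦(1 : ℤ)⟧ ⟶ X⟦(1 : ℤ)⟧) := by
      have := LinearMap.finrank_le_finrank_of_injective hQ2inj
      rwa [Subspace.dual_finrank_eq] at this
    have hQ2surj : Function.Surjective Q2 := by
      rw [← LinearMap.injective_iff_surjective_of_finrank_eq_finrank
        (by rw [Subspace.dual_finrank_eq]; exact le_antisymm hle2 hle1)]
      exact hQ2inj
    -- main argument
    let R : (A₂⟦(1 : ℤ)⟧ ⟶ A⟦(1 : ℤ)⟧) →ₗ[k] (A₂⟦(1 : ℤ)⟧ ⟶ X⟦(1 : ℤ)⟧) :=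
      Linear.rightComp k (A₂⟦(1 : ℤ)⟧) ((shiftFunctor T (1 : ℤ)).map a)
    have key : (shiftFunctor T (1 : ℤ)).map φ ∈ LinearMap.range R := by
      by_contra hmem
      have hq : (LinearMap.range R).mkQ ((shiftFunctor T (1 : ℤ)).map φ) ≠ 0 := by
        simpa [Submodule.Quotient.mk_eq_zero] using hmem
      obtain ⟨xi, hxi⟩ := exists_dual_one (k := k) hq
      set mu : Module.Dual k (A₂⟦(1 : ℤ)⟧ ⟶ X⟦(1 : ℤ)⟧) :=
        xi.comp (LinearMap.range R).mkQ with hmu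
      obtain ⟨χ₀, hχ₀⟩ := hQ2surj mu
      have hχ₀ne : χ₀ ≠ 0 := by
        rintro rfl
        rw [map_zero] at hχ₀
        have h0 : mu ((shiftFunctor T (1 : ℤ)).map φ) = 1 := hxi
        rw [← hχ₀] at h0
        simp at h0
      obtain ⟨cc, hcc⟩ := (socL χ₀ hχ₀ne).2
      -- evaluate `mu` at `R cc` two ways
      have e1 : mu (R cc) = 0 := by
        have hmemR : R cc ∈ LinearMap.range R := LinearMap.mem_range_self R cc
        have hz : (LinearMap.range R).mkQ (R cc) = 0 := by
          rw [Submodule.mkQ_apply, Submodule.Quotient.mk_eq_zero]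
          exact hmemR
        simp only [hmu, LinearMap.coe_comp, Function.comp_apply]
        rw [hz]
        exact map_zero xi
      have e2 : mu (R cc) = 1 := by
        rw [← hχ₀]
        have : Q2 χ₀ (R cc) = lam (χ₀ ≫ (cc ≫ (shiftFunctor T (1 : ℤ)).map a)) := rfl
        rw [this, ← Category.assoc, hcc, ← hn, hlam]
      rw [e1] at e2
      exact one_ne_zero e2.symm
    obtain ⟨t', ht'⟩ := key
    obtain ⟨t, ht⟩ := (shiftFunctor T (1 : ℤ)).map_surjective t'
    refine ⟨t, (shiftFunctor T (1 : ℤ)).map_injective ?_⟩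
    rw [CategoryTheory.Functor.map_comp, ht]
    exact ht'
  · -- right minimality
    intro h hha
    by_contra hni
    have hns : ¬ ∃ v' : A ⟶ A, h ≫ v' = 𝟙 A := by
      rintro ⟨v', hv'⟩
      apply hni
      haveI := hfd A A
      -- `x ↦ x ≫ h` is injective, hence surjective
      let L : (A ⟶ A) →ₗ[k] (A ⟶ A) := Linear.rightComp k A h
      have hLinj : Function.Injective L := by
        intro x y hxy
        have : (x ≫ h) ≫ v' = (y ≫ h) ≫ v' := by
          simpa only [L, Linear.rightComp_apply] using congrArg (· ≫ v') hxy
        simpa only [Category.assoc, hv', Category.comp_id] using this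
      have hLsurj : Function.Surjective L := LinearMap.injective_iff_surjective.1 hLinj
      obtain ⟨gg, hgg⟩ := hLsurj (𝟙 A)
      have hgh : gg ≫ h = 𝟙 A := hgg
      have hveq : v' = gg := by
        calc v' = 𝟙 A ≫ v' := (Category.id_comp _).symm
        _ = (gg ≫ h) ≫ v' := by rw [hgh]
        _ = gg ≫ (h ≫ v') := Category.assoc _ _ _
        _ = gg := by rw [hv', Category.comp_id]
      exact ⟨⟨v', hv', by rw [hveq]; exact hgh⟩⟩
    obtain ⟨w', hw'⟩ := hAii A hAS h hns
    apply hd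
    have h31 : w ≫ (shiftFunctor T (1 : ℤ)).map u = 0 := comp_distTriang_mor_zero₃₁ _ hT₂
    have hah : (shiftFunctor T (1 : ℤ)).map h =
        (shiftFunctor T (1 : ℤ)).map u ≫ (shiftFunctor T (1 : ℤ)).map w' := by
      rw [← CategoryTheory.Functor.map_comp, hw']
    calc d = w ≫ (shiftFunctor T (1 : ℤ)).map a := hn
    _ = w ≫ (shiftFunctor T (1 : ℤ)).map (h ≫ a) := by rw [hha]
    _ = w ≫ ((shiftFunctor T (1 : ℤ)).map h ≫ (shiftFunctor T (1 : ℤ)).map a) := by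
        rw [CategoryTheory.Functor.map_comp]
    _ = (w ≫ (shiftFunctor T (1 : ℤ)).map u) ≫
        ((shiftFunctor T (1 : ℤ)).map w' ≫ (shiftFunctor T (1 : ℤ)).map a) := by
        rw [hah]; simp only [Category.assoc]
    _ = 0 := by rw [h31, zero_comp]
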